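/- Let 𝒳 ⊆ ℝ and 𝒮 ⊆ ℝ be finite, with min over distinct s, s' ∈ 𝒮 of |s − s'| ≥ 2 · max over x, x' ∈ 𝒳 of |x − x'|. Fix s₀ ∈ 𝒮 and define the replacement map φ : 𝒯 → 𝒯 sending t to the constant function with value t(s₀). Then for every pair t, r ∈ 𝒯, d_SI(φ(t), φ(r)) ≥ d_SI(t,r); consequently, for any two codewords of length n, the squared distance Σᵢ d_SI² does not decrease under coordinatewise replacement, i.e., it is sufficient to use the M constant functions (out of all M^Q symbols of 𝒯) in the encoding as far as the distance spectrum is concerned. -/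

import Mathlib

open Finset

/-- The distance `d_SI` between two input symbols of the associated channel. -/
noncomputable def dSI (S : Finset ℝ) (hS : S.Nonempty) (t r : ℝ → ℝ) : ℝ :=
  (S ×ˢ S).inf' (hS.product hS) fun p => |t p.1 + p.1 - (r p.2 + p.2)|

lemma dSI_nonneg (S : Finset ℝ) (hS : S.Nonempty) (t r : ℝ → ℝ) :
    0 ≤ dSI S hS t r := by
  apply Finset.le_inf'
  intro p _
  exact abs_nonneg _

lemma key (X S : Finset ℝ) (hS : S.Nonempty)
    (hgap : ∀ s ∈ S, ∀ s' ∈ S, s ≠ s' → ∀ x ∈ X, ∀ x' ∈ X, |s - s'| ≥ 2 * |x - x'|)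
    (s₀ : ℝ) (hs₀ : s₀ ∈ S) (t r : ℝ → ℝ) (ht : ∀ s ∈ S, t s ∈ X)
    (hr : ∀ s ∈ S, r s ∈ X) :
    dSI S hS (fun _ => t s₀) (fun _ => r s₀) ≥ dSI S hS t r := by
  have h0 : dSI S hS t r ≤ |t s₀ - r s₀| := by
    have hmem : (s₀, s₀) ∈ S ×ˢ S := Finset.mem_product.2 ⟨hs₀, hs₀⟩
    have h := Finset.inf'_le (f := fun p : ℝ × ℝ => |t p.1 + p.1 - (r p.2 + p.2)|) hmem
    unfold dSI; exact h.trans_eq (by ring_nf)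
  apply Finset.le_inf'
  rintro ⟨s₁, s₂⟩ hp
  obtain ⟨h₁, h₂⟩ := Finset.mem_product.1 hp
  simp only
  rcases eq_or_ne s₁ s₂ with h | h
  · subst h
    calc dSI S hS t r ≤ |t s₀ - r s₀| := h0
      _ = |t s₀ + s₁ - (r s₀ + s₁)| := by ring_nf
  · have hg := hgap s₁ h₁ s₂ h₂ h (t s₀) (ht s₀ hs₀) (r s₀) (hr s₀ hs₀)
    have htri : |s₁ - s₂| - |t s₀ - r s₀| ≤ |t s₀ + s₁ - (r s₀ + s₂)| := by
      have h1 := abs_sub (t s₀ + s₁ - (r s₀ + s₂)) (t s₀ - r s₀)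
      have heq : t s₀ + s₁ - (r s₀ + s₂) - (t s₀ - r s₀) = s₁ - s₂ := by ring
      rw [heq] at h1
      linarith
    calc dSI S hS t r ≤ |t s₀ - r s₀| := h0
      _ ≤ |s₁ - s₂| - |t s₀ - r s₀| := by linarith
      _ ≤ |t s₀ + s₁ - (r s₀ + s₂)| := htri

/-- If the minimum gap between distinct interference symbols is at least twice the
maximum spread of `X`, then replacing each symbol `t ∈ 𝒯` by the constant function with
value `t s₀` (for a fixed `s₀ ∈ S`) never decreases `d_SI`; consequently the squared
distance between codewords does not decrease under coordinatewise replacement, so it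
suffices to use the `M` constant functions in the encoding as far as the distance
spectrum is concerned. -/
theorem stmt9 (X S : Finset ℝ) (hS : S.Nonempty)
    (hgap : ∀ s ∈ S, ∀ s' ∈ S, s ≠ s' → ∀ x ∈ X, ∀ x' ∈ X, |s - s'| ≥ 2 * |x - x'|)
    (s₀ : ℝ) (hs₀ : s₀ ∈ S) :
    (∀ t r : ℝ → ℝ, (∀ s ∈ S, t s ∈ X) → (∀ s ∈ S, r s ∈ X) →
      dSI S hS (fun _ => t s₀) (fun _ => r s₀) ≥ dSI S hS t r) ∧
    (∀ (n : ℕ) (t r : Fin n → ℝ → ℝ),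
      (∀ i, ∀ s ∈ S, t i s ∈ X) → (∀ i, ∀ s ∈ S, r i s ∈ X) →
      ∑ i, dSI S hS (fun _ => t i s₀) (fun _ => r i s₀) ^ 2 ≥
        ∑ i, dSI S hS (t i) (r i) ^ 2) := by
  constructor
  · intro t r ht hr
    exact key X S hS hgap s₀ hs₀ t r ht hr
  · intro n t r ht hr
    apply Finset.sum_le_sum
    intro i _
    have h := key X S hS hgap s₀ hs₀ (t i) (r i) (ht i) (hr i)
    have hnn := dSI_nonneg S hS (t i) (r i)
    nlinarith [dSI_nonneg S hS (fun _ => t i s₀) (fun _ => r i s₀)]
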